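/- Let F be a field of arbitrary characteristic, let (A,σ) be a central simple F-algebra with involution of the first kind, let B be a simple F-subalgebra of A with center F such that σ(B) = B, and let C = C_A(B) be the centralizer of B in A. If char F ≠ 2, or if char F = 2 and 1 ∉ Alt(C,σ|_C), then Alt(A,σ) ∩ B = Alt(B,σ|_B). -/

import Mathlib

open Finset
open TensorProduct




/-- In a simple algebra, any nonzero element generates everything:
`1` is a finite sum `∑ bᵢ * s * bᵢ'`. -/
lemma exists_one_rep (F : Type) [Field F] {D : Type} [Ring D] [Algebra F D] [IsSimpleRing D] {s : D} (hs : s ≠ 0) :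
    ∃ (n : ℕ) (b b' : Fin n → D), ∑ i, b i * s * b' i = 1 := by
  classical
  set S : Set D := {y | ∃ b b' : D, y = b * s * b'} with hS
  have hmul_left : ∀ (x y : D), y ∈ Submodule.span F S → x * y ∈ Submodule.span F S := by
    intro x y hy
    induction hy using Submodule.span_induction with
    | mem y hy =>
      obtain ⟨b, b', rfl⟩ := hy
      exact Submodule.subset_span ⟨x * b, b', by simp [mul_assoc]⟩
    | zero => simpa using Submodule.zero_mem _
    | add a b _ _ ha hb => rw [mul_add]; exact Submodule.add_mem _ ha hb
    | smul a m _ hm => rw [mul_smul_comm]; exact Submodule.smul_mem _ _ hm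
  have hmul_right : ∀ (x y : D), y ∈ Submodule.span F S → y * x ∈ Submodule.span F S := by
    intro x y hy
    induction hy using Submodule.span_induction with
    | mem y hy =>
      obtain ⟨b, b', rfl⟩ := hy
      exact Submodule.subset_span ⟨b, b' * x, by simp [mul_assoc]⟩
    | zero => simpa using Submodule.zero_mem _
    | add a b _ _ ha hb => rw [add_mul]; exact Submodule.add_mem _ ha hb
    | smul a m _ hm => rw [smul_mul_assoc]; exact Submodule.smul_mem _ _ hm
  haveI := ‹IsSimpleRing D›.simple
  set T : TwoSidedIdeal D := TwoSidedIdeal.mk' (Submodule.span F S : Set D)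
    (Submodule.zero_mem _) (fun hx hy => Submodule.add_mem _ hx hy)
    (fun hx => Submodule.neg_mem _ hx)
    (fun {x y} hy => hmul_left x y hy) (fun {x y} hx => hmul_right y x hx) with hT
  have hsT : s ∈ T := by
    rw [hT, TwoSidedIdeal.mem_mk']
    exact Submodule.subset_span ⟨1, 1, by simp⟩
  have hTtop : T = ⊤ := by
    rcases eq_bot_or_eq_top T with h | h
    · rw [h] at hsT
      exact absurd (by simpa using hsT) hs
    · exact h
  have h1 : (1 : D) ∈ Submodule.span F S := by
    have : (1 : D) ∈ T := by rw [hTtop]; trivial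
    rwa [hT, TwoSidedIdeal.mem_mk'] at this
  obtain ⟨n, f, g, hfg⟩ := Submodule.mem_span_set'.mp h1
  refine ⟨n, fun i => f i • (g i).2.choose, fun i => (g i).2.choose_spec.choose, ?_⟩
  rw [← hfg]
  refine Finset.sum_congr rfl fun i _ => ?_
  have := (g i).2.choose_spec.choose_spec
  rw [smul_mul_assoc, smul_mul_assoc, ← this]


lemma key_inj (F : Type) [Field F] {D : Type} [Ring D] [Algebra F D] [IsSimpleRing D]
    (hcen : Subalgebra.center F D = ⊥)
    {ι : Type} (β : Module.Basis ι F D) :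
    ∀ (s : Finset ι) (c : ι → D), (∀ x, ∑ i ∈ s, c i * x * β i = 0) → ∀ i ∈ s, c i = 0 := by
  classical
  intro s
  induction s using Finset.strongInduction with
  | _ s IH =>
    intro c hrel
    by_contra h
    push_neg at h
    obtain ⟨i₀, hi₀s, hci₀⟩ := h
    obtain ⟨n, b, b', hb⟩ := exists_one_rep F (D := D) hci₀
    set d : ι → D := fun i => ∑ m, b m * c i * b' m with hd
    have hdi₀ : d i₀ = 1 := hb
    have hdrel : ∀ x, ∑ i ∈ s, d i * x * β i = 0 := by
      intro x
      have step : ∀ i, d i * x * β i = ∑ m, b m * (c i * (b' m * x) * β i) := by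
        intro i
        rw [hd]
        simp only [Finset.sum_mul]
        exact Finset.sum_congr rfl fun m _ => by simp [mul_assoc]
      calc ∑ i ∈ s, d i * x * β i
          = ∑ i ∈ s, ∑ m, b m * (c i * (b' m * x) * β i) := Finset.sum_congr rfl fun i _ => step i
        _ = ∑ m, b m * (∑ i ∈ s, c i * (b' m * x) * β i) := by
            rw [Finset.sum_comm]
            exact Finset.sum_congr rfl fun m _ => by rw [Finset.mul_sum]
        _ = 0 := by simp [hrel]
    have hcomm : ∀ (y : D), ∀ i ∈ s, y * d i = d i * y := by
      intro y
      have hrel2 : ∀ x, ∑ i ∈ s.erase i₀, (y * d i - d i * y) * x * β i = 0 := by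
        intro x
        have hzero : (y * d i₀ - d i₀ * y) * x * β i₀ = 0 := by
          rw [hdi₀]; simp
        rw [Finset.sum_erase s hzero]
        have : ∑ i ∈ s, (y * d i - d i * y) * x * β i
            = y * (∑ i ∈ s, d i * x * β i) - ∑ i ∈ s, d i * (y * x) * β i := by
          rw [Finset.mul_sum, ← Finset.sum_sub_distrib]
          exact Finset.sum_congr rfl fun i _ => by simp [sub_mul, mul_assoc]
        rw [this, hdrel, hdrel, mul_zero, sub_zero]
      have hzero := IH (s.erase i₀) (Finset.erase_ssubset hi₀s) _ hrel2
      intro i hi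
      rcases eq_or_ne i i₀ with rfl | hne
      · rw [hdi₀, mul_one, one_mul]
      · have := hzero i (Finset.mem_erase.mpr ⟨hne, hi⟩)
        exact sub_eq_zero.mp this
    have hcentral : ∀ i ∈ s, ∃ μ : F, d i = algebraMap F D μ := by
      intro i hi
      have : d i ∈ Subalgebra.center F D :=
        Subalgebra.mem_center_iff.mpr fun y => (hcomm y i hi)
      rw [hcen] at this
      obtain ⟨μ, hμ⟩ := Algebra.mem_bot.mp this
      exact ⟨μ, hμ.symm⟩
    set ν : ι → F := fun i => if h : i ∈ s then (hcentral i h).choose else 0 with hν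
    have hdν : ∀ i ∈ s, d i = algebraMap F D (ν i) := by
      intro i hi
      rw [hν]; simp only [hi, dif_pos]
      exact (hcentral i hi).choose_spec
    have hsum : ∑ i ∈ s, ν i • β i = 0 := by
      have := hdrel 1
      rw [← this]
      refine Finset.sum_congr rfl fun i hi => ?_
      rw [hdν i hi, mul_one, Algebra.smul_def]
    have hν0 := linearIndependent_iff'.mp β.linearIndependent s ν hsum i₀ hi₀s
    have : d i₀ = 0 := by rw [hdν i₀ hi₀s, hν0, map_zero]
    rw [hdi₀] at this
    exact one_ne_zero this
variable {F D A : Type} [Field F] [Ring D] [Algebra F D] [Ring A] [Algebra F A]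

/-- `s ⊗ t ↦ (a ↦ f s * a * f t)`. -/
noncomputable def TMap (f : D →ₐ[F] A) : D ⊗[F] D →ₗ[F] (A →ₗ[F] A) :=
  TensorProduct.lift
    (LinearMap.mk₂ F (fun s t => LinearMap.mulRight F (f t) ∘ₗ LinearMap.mulLeft F (f s))
      (fun s s' t => by ext a; simp [add_mul])
      (fun μ s t => by ext a; simp [smul_mul_assoc])
      (fun s t t' => by ext a; simp [mul_add])
      (fun μ s t => by ext a; simp [mul_smul_comm]))

@[simp] lemma TMap_tmul (f : D →ₐ[F] A) (s t : D) (a : A) :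
    TMap f (s ⊗ₜ t) a = f s * a * f t := rfl

lemma TMap_L (f : D →ₐ[F] A) (b : D) (u : D ⊗[F] D) (a : A) :
    TMap f (TensorProduct.map (LinearMap.mulLeft F b) LinearMap.id u) a = f b * TMap f u a := by
  induction u with
  | zero => simp
  | tmul s t => simp [mul_assoc]
  | add u v hu hv => simp [map_add, hu, hv, mul_add]

lemma TMap_R (f : D →ₐ[F] A) (b : D) (u : D ⊗[F] D) (a : A) :
    TMap f (TensorProduct.map LinearMap.id (LinearMap.mulRight F b) u) a = TMap f u a * f b := by
  induction u with
  | zero => simp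
  | tmul s t => simp [mul_assoc]
  | add u v hu hv => simp [map_add, hu, hv, add_mul]

lemma TMap_rep [FiniteDimensional F D] {ι : Type} [Fintype ι] (β : Module.Basis ι F D)
    (u : D ⊗[F] D) : ∃ c : ι → D, u = ∑ i, c i ⊗ₜ[F] β i := by
  classical
  induction u with
  | zero => exact ⟨0, by simp⟩
  | tmul s t =>
    refine ⟨fun i => β.repr t i • s, ?_⟩
    calc s ⊗ₜ[F] t = s ⊗ₜ[F] (∑ i, β.repr t i • β i) := by rw [β.sum_repr t]
      _ = ∑ i, (β.repr t i • s) ⊗ₜ[F] β i := by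
          rw [tmul_sum]
          exact Finset.sum_congr rfl fun i _ => (smul_tmul _ _ _).symm
  | add u v hu hv =>
    obtain ⟨c, rfl⟩ := hu
    obtain ⟨c', rfl⟩ := hv
    exact ⟨c + c', by rw [← Finset.sum_add_distrib]; simp [add_tmul]⟩

lemma Phi_bij [FiniteDimensional F D] [IsSimpleRing D]
    (hcen : Subalgebra.center F D = ⊥) :
    Function.Bijective (TMap (AlgHom.id F D) : D ⊗[F] D →ₗ[F] (D →ₗ[F] D)) := by
  have hinj : Function.Injective (TMap (AlgHom.id F D) : D ⊗[F] D →ₗ[F] (D →ₗ[F] D)) := by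
    rw [← LinearMap.ker_eq_bot, LinearMap.ker_eq_bot']
    intro u hu
    obtain ⟨c, rfl⟩ := TMap_rep (Module.finBasis F D) u
    have hc : ∀ i, c i = 0 := by
      have hr : ∀ x, ∑ i, c i * x * Module.finBasis F D i = 0 := by
        intro x
        have := congrArg (fun g : D →ₗ[F] D => g x) hu
        simpa [map_sum] using this
      intro i
      exact key_inj F hcen (Module.finBasis F D) Finset.univ c hr i (Finset.mem_univ i)
    simp [hc]
  refine ⟨hinj, ?_⟩
  rw [← LinearMap.injective_iff_surjective_of_finrank_eq_finrank
    (by rw [Module.finrank_tensorProduct, Module.finrank_linearMap])]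
  exact hinj
lemma exists_functional {F V : Type} [Field F] [AddCommGroup V] [Module F V]
    {W : Submodule F V} {v : V} (hv : v ∉ W) :
    ∃ lam : V →ₗ[F] F, lam v = 1 ∧ ∀ w ∈ W, lam w = 0 := by
  have hq : W.mkQ v ≠ 0 := by
    rw [Submodule.mkQ_apply, ne_eq, Submodule.Quotient.mk_eq_zero]
    exact hv
  obtain ⟨p, hp⟩ := Submodule.exists_isCompl (Submodule.span F {W.mkQ v})
  let e := LinearEquiv.toSpanNonzeroSingleton F (V ⧸ W) (W.mkQ v) hq
  let proj := (Submodule.span F {W.mkQ v}).linearProjOfIsCompl p hp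
  refine ⟨(e.symm.toLinearMap ∘ₗ proj) ∘ₗ W.mkQ, ?_, ?_⟩
  · have h1 : proj (W.mkQ v) = ⟨W.mkQ v, Submodule.mem_span_singleton_self _⟩ :=
      Submodule.linearProjOfIsCompl_apply_left hp ⟨W.mkQ v, Submodule.mem_span_singleton_self _⟩
    simp only [LinearMap.comp_apply, h1]
    rw [← LinearEquiv.toSpanNonzeroSingleton_one F (V ⧸ W) (W.mkQ v) hq,
      ]
    exact e.symm_apply_apply 1
  · intro w hw
    have : W.mkQ w = 0 := by
      rw [Submodule.mkQ_apply, Submodule.Quotient.mk_eq_zero]; exact hw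
    simp [LinearMap.comp_apply, this]
set_option maxHeartbeats 2000000 in
theorem alt_inter_subalgebra_eq_alt_of_not_symplectic_centralizer
    (F : Type) [Field F]
    (A : Type) [Ring A] [Algebra F A] [FiniteDimensional F A]
    [Algebra.IsCentral F A] [IsSimpleRing A]
    (σ : A →ₗ[F] A)
    (hanti : ∀ x y, σ (x * y) = σ y * σ x)
    (hinv : ∀ x, σ (σ x) = x)
    (B : Subalgebra F A)
    (hBsimple : IsSimpleRing B)
    (hBcentral : Subalgebra.center F B = ⊥)
    (hσB : ∀ x, x ∈ B ↔ σ x ∈ B)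
    (hchar : ringChar F ≠ 2 ∨
      ¬ ∃ c ∈ Subalgebra.centralizer F (B : Set A), c - σ c = 1) :
    ∀ x ∈ B, (∃ y : A, y - σ y = x) ↔ (∃ y ∈ B, y - σ y = x) := by
  classical
  haveI : IsSimpleRing ↥B := hBsimple
  haveI : FiniteDimensional F ↥B := FiniteDimensional.finiteDimensional_submodule
    (Subalgebra.toSubmodule B)
  set β := Module.finBasis F ↥B with hβ
  have hbij := Phi_bij (F := F) (D := ↥B) hBcentral
  set E := LinearEquiv.ofBijective _ hbij with hE
  set φ : Fin (Module.finrank F ↥B) → (↥B →ₗ[F] ↥B) :=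
    fun j => (β.coord j).smulRight (1 : ↥B) with hφ
  set u : Fin (Module.finrank F ↥B) → ↥B ⊗[F] ↥B := fun j => E.symm (φ j) with huu
  have hu : ∀ j, TMap (AlgHom.id F ↥B) (u j) = φ j := fun j => E.apply_symm_apply (φ j)
  have hφapp : ∀ j (x : ↥B), φ j x = β.repr x j • 1 := by
    intro j x; rw [hφ]; simp [Module.Basis.coord_apply]
  -- commutation relation for the u j
  have hcommL : ∀ (b : ↥B) j,
      TensorProduct.map (LinearMap.mulLeft F b) LinearMap.id (u j)
        = TensorProduct.map LinearMap.id (LinearMap.mulRight F b) (u j) := by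
    intro b j
    apply hbij.injective
    apply LinearMap.ext
    intro x
    rw [TMap_L, TMap_R, hu j, hφapp j x]
    simp [mul_smul_comm, smul_mul_assoc]
  -- reconstruction relation
  have hrecon : ∑ j, TensorProduct.map (LinearMap.mulLeft F (β j)) LinearMap.id (u j)
      = (1 : ↥B) ⊗ₜ[F] (1 : ↥B) := by
    apply hbij.injective
    rw [map_sum]
    apply LinearMap.ext
    intro x
    rw [LinearMap.sum_apply]
    have h1 : ∀ j, TMap (AlgHom.id F ↥B)
        (TensorProduct.map (LinearMap.mulLeft F (β j)) LinearMap.id (u j)) x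
          = β.repr x j • β j := by
      intro j
      rw [TMap_L, hu j, hφapp j x]
      simp [mul_smul_comm]
    rw [Finset.sum_congr rfl fun j _ => h1 j, β.sum_repr x]
    simp
  -- evaluation on A
  set ev := (TMap B.val : ↥B ⊗[F] ↥B →ₗ[F] (A →ₗ[F] A)) with hev
  have hC : ∀ j (a : A), ev (u j) a ∈ Subalgebra.centralizer F (B : Set A) := by
    intro j a
    rw [Subalgebra.mem_centralizer_iff]
    intro g hg
    have h1 : g * ev (u j) a
        = ev (TensorProduct.map (LinearMap.mulLeft F ⟨g, hg⟩) LinearMap.id (u j)) a :=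
      (TMap_L B.val ⟨g, hg⟩ (u j) a).symm
    rw [hcommL ⟨g, hg⟩ j] at h1
    rw [h1, TMap_R]
    rfl
  have hrec : ∀ a : A, ∑ j, (β j : A) * ev (u j) a = a := by
    intro a
    have h1 : ∀ j, (β j : A) * ev (u j) a
        = ev (TensorProduct.map (LinearMap.mulLeft F (β j)) LinearMap.id (u j)) a :=
      fun j => (TMap_L B.val (β j) (u j) a).symm
    rw [Finset.sum_congr rfl fun j _ => h1 j, ← LinearMap.sum_apply, ← map_sum, hrecon]
    simp [hev]
  -- value of ev on products b * z with z central
  have hval : ∀ (w : ↥B ⊗[F] ↥B) (b : ↥B) (z : A),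
      z ∈ Subalgebra.centralizer F (B : Set A) →
      ev w ((b : A) * z) = (TMap (AlgHom.id F ↥B) w b : A) * z := by
    intro w b z hz
    induction w with
    | zero => simp
    | tmul s t =>
      have ht : (t : A) * z = z * (t : A) := (Subalgebra.mem_centralizer_iff (R := F)).mp hz _ t.2
      show (s : A) * ((b : A) * z) * (t : A) = ((s * b * t : ↥B) : A) * z
      push_cast
      rw [← mul_assoc (s:A) (b:A) z, mul_assoc ((s:A)*(b:A)) z (t:A), ← ht]
      exact (mul_assoc _ _ _).symm
    | add w₁ w₂ h₁ h₂ =>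
      rw [map_add, map_add, LinearMap.add_apply, LinearMap.add_apply, h₁, h₂]
      push_cast
      rw [add_mul]
  have hval2 : ∀ j (b : ↥B) (z : A), z ∈ Subalgebra.centralizer F (B : Set A) →
      ev (u j) ((b : A) * z) = β.repr b j • z := by
    intro j b z hz
    rw [hval (u j) b z hz, hu j, hφapp j b]
    push_cast
    rw [smul_mul_assoc, one_mul]
  -- sigma facts
  have hσ1 : σ (1 : A) = 1 := by
    have h : ∀ a : A, σ 1 * a = a := by
      intro a
      have h2 := hanti (σ a) 1
      rw [mul_one, hinv] at h2
      exact h2.symm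
    have := h 1
    rwa [mul_one] at this
  have hσB' : ∀ b : ↥B, σ (b : A) ∈ B := fun b => (hσB _).mp b.2
  have hσC : ∀ z ∈ Subalgebra.centralizer F (B : Set A),
      σ z ∈ Subalgebra.centralizer F (B : Set A) := by
    intro z hz
    rw [Subalgebra.mem_centralizer_iff]
    intro g hg
    have h1 : σ g ∈ B := (hσB g).mp hg
    have h2 : σ g * z = z * σ g := (Subalgebra.mem_centralizer_iff (R := F)).mp hz (σ g) h1
    calc g * σ z = σ (σ g) * σ z := by rw [hinv]
      _ = σ (z * σ g) := (hanti z (σ g)).symm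
      _ = σ (σ g * z) := by rw [h2]
      _ = σ z * σ (σ g) := hanti (σ g) z
      _ = σ z * g := by rw [hinv]
  -- the functional
  set W := Submodule.map (LinearMap.id - σ)
    (Subalgebra.toSubmodule (Subalgebra.centralizer F (B : Set A))) with hW
  have h1W : (1 : A) ∉ W := by
    intro hmem
    obtain ⟨c, hc, hc1⟩ := hmem
    have hcC : c ∈ Subalgebra.centralizer F (B : Set A) := hc
    have e1 : c - σ c = 1 := by simpa using hc1
    rcases hchar with hch | hch
    · have e2 : σ c - c = 1 := by
        have h2 := congrArg σ e1
        rw [map_sub, hinv, hσ1] at h2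
        exact h2
      have h20 : (1 : A) + 1 = 0 := by
        have h : (c - σ c) + (σ c - c) = 1 + 1 := by rw [e1, e2]
        rw [sub_add_sub_cancel, sub_self] at h
        exact h.symm
      have hF : (1 : F) + 1 = 0 := by
        have h3 : algebraMap F A (1+1) = algebraMap F A 0 := by
          rw [map_add, map_one, map_zero, h20]
        exact (algebraMap F A).injective h3
      have h2 : ((2 : ℕ) : F) = 0 := by
        rw [Nat.cast_ofNat, ← one_add_one_eq_two, hF]
      have hdvd : ringChar F ∣ 2 := ringChar.dvd h2
      rcases (Nat.dvd_prime Nat.prime_two).mp hdvd with h | h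
      · haveI hc1' := ringChar.charP F
        rw [h] at hc1'
        have h1 := CharP.cast_eq_zero F 1
        rw [Nat.cast_one] at h1
        exact absurd h1 one_ne_zero
      · exact hch h
    · exact hch ⟨c, hcC, e1⟩
  obtain ⟨lam, hlam1, hlamW⟩ := exists_functional h1W
  have hlamσ : ∀ z ∈ Subalgebra.centralizer F (B : Set A), lam (σ z) = lam z := by
    intro z hz
    have hw : z - σ z ∈ W := ⟨z, hz, by simp⟩
    have h0 := hlamW _ hw
    rw [map_sub] at h0
    exact (sub_eq_zero.mp h0).symm
  -- the projection
  set π : A →ₗ[F] A := ∑ j, ((lam ∘ₗ ev (u j)).smulRight ((β j : A))) with hπdef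
  have hπ : ∀ a, π a = ∑ j, lam (ev (u j) a) • (β j : A) := by
    intro a
    rw [hπdef]
    simp [LinearMap.sum_apply, LinearMap.smulRight_apply]
  have hπB : ∀ a, π a ∈ B := by
    intro a
    rw [hπ]
    exact Subalgebra.sum_mem B fun j _ => Subalgebra.smul_mem B (β j).2 _
  have hπbc : ∀ (b : ↥B) (z : A), z ∈ Subalgebra.centralizer F (B : Set A) →
      π ((b : A) * z) = lam z • (b : A) := by
    intro b z hz
    rw [hπ]
    have h1 : ∀ j, lam (ev (u j) ((b : A) * z)) = β.repr b j * lam z := by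
      intro j
      rw [hval2 j b z hz, map_smul, smul_eq_mul]
    calc ∑ j, lam (ev (u j) ((b : A) * z)) • (β j : A)
        = ∑ j, lam z • (β.repr b j • (β j : A)) := by
          refine Finset.sum_congr rfl fun j _ => ?_
          rw [h1 j, mul_comm, ← smul_smul]
      _ = lam z • ∑ j, β.repr b j • (β j : A) := by rw [Finset.smul_sum]
      _ = lam z • (b : A) := by
          congr 1
          have hb := congrArg (B.val.toLinearMap) (β.sum_repr b)
          rw [map_sum] at hb
          simpa using hb
  have hπσbc : ∀ (b : ↥B) (z : A), z ∈ Subalgebra.centralizer F (B : Set A) →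
      π (σ ((b : A) * z)) = σ (π ((b : A) * z)) := by
    intro b z hz
    have h1 : σ ((b : A) * z) = ((⟨σ (b : A), hσB' b⟩ : ↥B) : A) * σ z := by
      rw [hanti]
      exact ((Subalgebra.mem_centralizer_iff (R := F)).mp (hσC z hz) _ (hσB' b)).symm
    rw [h1, hπbc _ _ (hσC z hz), hπbc b z hz, map_smul, hlamσ z hz]
  have hπσ : ∀ a, π (σ a) = σ (π a) := by
    intro a
    calc π (σ a) = π (σ (∑ j, (β j : A) * ev (u j) a)) := by rw [hrec a]
      _ = ∑ j, π (σ ((β j : A) * ev (u j) a)) := by rw [map_sum, map_sum]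
      _ = ∑ j, σ (π ((β j : A) * ev (u j) a)) :=
          Finset.sum_congr rfl fun j _ => hπσbc (β j) _ (hC j a)
      _ = σ (π (∑ j, (β j : A) * ev (u j) a)) := by rw [map_sum, map_sum]
      _ = σ (π a) := by rw [hrec a]
  -- conclusion
  intro x hx
  constructor
  · rintro ⟨y, hy⟩
    refine ⟨π y, hπB y, ?_⟩
    have hπx : π x = x := by
      have h1 := hπbc ⟨x, hx⟩ 1 (one_mem _)
      rw [mul_one, hlam1, one_smul] at h1
      exact h1
    calc π y - σ (π y) = π y - π (σ y) := by rw [hπσ]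
      _ = π (y - σ y) := (map_sub π y (σ y)).symm
      _ = π x := by rw [hy]
      _ = x := hπx
  · rintro ⟨y, _, hy⟩
    exact ⟨y, hy⟩
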